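/- Conversely, if I is an answer set of a ground normal program P (a minimal model of the reduct P^I), then there exists an injective level mapping ψ : I → {0,…,|I|-1} such that every atom of I is founded with respect to ψ. -/

import Mathlib

/-- A ground normal rule: at most one head atom, positive and negative body. -/
structure GRule (A : Type*) where
  head : Option A
  pos : Finset A
  neg : Finset A

/-- `I` satisfies a ground rule `r`. -/
def Satisfies {A : Type*} (I : Set A) (r : GRule A) : Prop :=
  (∃ a ∈ r.head, a ∈ I) ∨ ¬(↑r.pos ⊆ I) ∨ ∃ b ∈ r.neg, b ∈ I

/-- `J` is a model of the Gelfond–Lifschitz reduct `P^I`. -/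
def ModelsReduct {A : Type*} (P : Set (GRule A)) (I J : Set A) : Prop :=
  ∀ r ∈ P, (∀ b ∈ r.neg, b ∉ I) → ↑r.pos ⊆ J → ∃ a ∈ r.head, a ∈ J

/-- `I` is an answer set of `P`: a minimal model of the reduct `P^I`. -/
def IsAnswerSet {A : Type*} (P : Set (GRule A)) (I : Set A) : Prop :=
  ModelsReduct P I I ∧ ∀ J ⊂ I, ¬ ModelsReduct P I J

/-- Atom `a` is founded in `I` w.r.t. the level mapping `ψ`. -/
def Founded {A : Type*} (P : Set (GRule A)) (I : Set A) (ψ : A → ℕ) (a : A) : Prop :=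
  ∃ r ∈ P, r.head = some a ∧ ↑r.pos ⊆ I ∧ (∀ b ∈ r.neg, b ∉ I) ∧
    ∀ b ∈ r.pos, ψ b < ψ a

/-- If `I` is an answer set of a finite ground normal program `P`, then there is an
injective level mapping `ψ : I → {0,…,|I|-1}` such that every atom of `I` is founded. -/
theorem answer_set_has_level_mapping {A : Type*} (P : Set (GRule A)) (hP : P.Finite)
    (I : Set A) (hI : I.Finite) (has : IsAnswerSet P I) :
    ∃ ψ : A → ℕ, Set.InjOn ψ I ∧ (∀ a ∈ I, ψ a < I.ncard) ∧
      ∀ a ∈ I, Founded P I ψ a := by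
  classical
  obtain ⟨hmod, hmin⟩ := has
  -- The immediate consequence operator of the reduct
  set T : Set A → Set A := fun J =>
    {a | ∃ r ∈ P, r.head = some a ∧ (∀ b ∈ r.neg, b ∉ I) ∧ ↑r.pos ⊆ J} with hT
  have Tmono : ∀ J J' : Set A, J ⊆ J' → T J ⊆ T J' := by
    intro J J' hJJ a ⟨r, hr, hh, hn, hp⟩
    exact ⟨r, hr, hh, hn, hp.trans hJJ⟩
  -- stages
  set D : ℕ → Set A := fun k => T^[k] ∅ with hD
  have hDsucc : ∀ k, D (k + 1) = T (D k) := by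
    intro k
    simp only [hD, Function.iterate_succ_apply']
  have hDI : ∀ k, D k ⊆ I := by
    intro k
    induction k with
    | zero => simp [hD]
    | succ k ih =>
      rw [hDsucc]
      rintro a ⟨r, hr, hh, hn, hp⟩
      obtain ⟨a', ha', haI⟩ := hmod r hr hn (hp.trans ih)
      rw [hh] at ha'
      cases ha'
      exact haI
  have hDmono : ∀ k, D k ⊆ D (k + 1) := by
    intro k
    induction k with
    | zero => simp [hD]
    | succ k ih => rw [hDsucc, hDsucc (k+1)]; exact Tmono _ _ ih
  have hDle : ∀ {k m : ℕ}, k ≤ m → D k ⊆ D m := by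
    intro k m h
    induction h with
    | refl => exact subset_rfl
    | step _ ih => exact ih.trans (hDmono _)
  -- the union of stages
  set K : Set A := ⋃ k, D k with hK
  have hKI : K ⊆ I := Set.iUnion_subset fun k => hDI k
  have hKmod : ModelsReduct P I K := by
    intro r hr hn hp
    -- positive body is finite, hence contained in some stage
    have hstage : ∃ k, ↑r.pos ⊆ D k := by
      have : ∀ b ∈ r.pos, ∃ k, b ∈ D k := by
        intro b hb
        have := hp (Finset.mem_coe.mpr hb)
        simpa [hK, Set.mem_iUnion] using this
      choose g hg using this
      refine ⟨(r.pos.attach.sup fun b => g b.1 b.2), ?_⟩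
      intro b hb
      have hb' : b ∈ r.pos := hb
      refine hDle ?_ (hg b hb')
      exact Finset.le_sup (f := fun b : {x // x ∈ r.pos} => g b.1 b.2) (Finset.mem_attach _ ⟨b, hb'⟩)
    obtain ⟨k, hk⟩ := hstage
    obtain ⟨a, ha, haI⟩ := hmod r hr hn (hp.trans hKI)
    refine ⟨a, ha, ?_⟩
    have : a ∈ T (D k) := by
      refine ⟨r, hr, ?_, hn, hk⟩
      cases hhead : r.head with
      | none => rw [hhead] at ha; cases ha
      | some a' => rw [hhead] at ha; cases ha; rfl
    rw [← hDsucc] at this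
    exact Set.mem_iUnion.mpr ⟨k + 1, this⟩
  have hKeq : K = I := by
    by_contra hne
    exact hmin K (ssubset_of_ne_of_subset hne hKI) hKmod
  -- every atom of I appears at some successor stage
  have happ : ∀ a ∈ I, ∃ k, a ∈ D (k + 1) := by
    intro a ha
    rw [← hKeq] at ha
    obtain ⟨k, hk⟩ := Set.mem_iUnion.mp ha
    cases k with
    | zero => simp [hD] at hk
    | succ k => exact ⟨k, hk⟩
  -- stage function
    -- ψ₀ a = least k with a ∈ D (k+1)
  set ψ₀ : A → ℕ := fun a => if h : ∃ k, a ∈ D (k + 1) then Nat.find h else 0 with hψ₀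
  have hψ₀mem : ∀ a ∈ I, a ∈ D (ψ₀ a + 1) := by
    intro a ha
    have h := happ a ha
    simp only [hψ₀, dif_pos h]
    exact Nat.find_spec h
  have hψ₀le : ∀ a, ∀ k, a ∈ D (k + 1) → ψ₀ a ≤ k := by
    intro a k hk
    have h : ∃ k, a ∈ D (k + 1) := ⟨k, hk⟩
    simp only [hψ₀, dif_pos h]
    exact Nat.find_le hk
  -- tie-breaking injection
  set s : Finset A := hI.toFinset with hs
  set l : List A := s.toList with hl
  set f : A → ℕ := fun a => l.idxOf a with hf
  have hfinj : ∀ a ∈ s, ∀ b ∈ s, f a = f b → a = b := by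
    intro a ha b hb hab
    have ha' : a ∈ l := by rw [hl]; exact Finset.mem_toList.mpr ha
    have hb' : b ∈ l := by rw [hl]; exact Finset.mem_toList.mpr hb
    have h1 : l.get ⟨l.idxOf a, List.idxOf_lt_length_iff.mpr ha'⟩ = a :=
      List.idxOf_get _
    have h2 : l.get ⟨l.idxOf b, List.idxOf_lt_length_iff.mpr hb'⟩ = b :=
      List.idxOf_get _
    rw [← h1, ← h2]
    congr 1
    exact Fin.ext hab
  have hflt : ∀ a ∈ s, f a < s.card := by
    intro a ha
    have ha' : a ∈ l := by rw [hl]; exact Finset.mem_toList.mpr ha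
    have := List.idxOf_lt_length_iff.mpr ha'
    rwa [hl, Finset.length_toList] at this
  -- combined key
  set N : ℕ := s.card + 1 with hN
  set key : A → ℕ := fun a => ψ₀ a * N + f a with hkey
  have hkeylt : ∀ a ∈ s, ∀ b ∈ s, ψ₀ a < ψ₀ b → key a < key b := by
    intro a ha b hb h
    simp only [hkey]
    calc ψ₀ a * N + f a < ψ₀ a * N + N := by
          have := hflt a ha; omega
      _ = (ψ₀ a + 1) * N := by ring
      _ ≤ ψ₀ b * N := Nat.mul_le_mul_right N h
      _ ≤ ψ₀ b * N + f b := Nat.le_add_right _ _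
  have hkeyinj : ∀ a ∈ s, ∀ b ∈ s, key a = key b → a = b := by
    intro a ha b hb h
    simp only [hkey] at h
    have hfa := hflt a ha
    have hfb := hflt b hb
    have h1 : ψ₀ a = ψ₀ b := by
      rcases lt_trichotomy (ψ₀ a) (ψ₀ b) with hlt | heq | hgt
      · nlinarith [Nat.mul_le_mul_right N (Nat.succ_le_of_lt hlt)]
      · exact heq
      · nlinarith [Nat.mul_le_mul_right N (Nat.succ_le_of_lt hgt)]
    have h2 : f a = f b := by
      rw [h1] at h; omega
    exact hfinj a ha b hb h2
  -- final rank function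
  set ψ : A → ℕ := fun a => (s.filter fun b => key b < key a).card with hψ
  have hmemS : ∀ a ∈ I, a ∈ s := by intro a ha; rw [hs]; exact hI.mem_toFinset.mpr ha
  have hψmono : ∀ a ∈ s, ∀ b ∈ s, key a < key b → ψ a < ψ b := by
    intro a ha b hb h
    simp only [hψ]
    apply Finset.card_lt_card
    constructor
    · intro c hc
      simp only [Finset.mem_filter] at hc ⊢
      exact ⟨hc.1, hc.2.trans h⟩
    · intro hcon
      have : a ∈ s.filter fun b => key b < key a := hcon (by simp [ha, h])
      simp at this
  have hcard : I.ncard = s.card := by rw [hs]; exact Set.ncard_eq_toFinset_card _ hI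
  refine ⟨ψ, ?_, ?_, ?_⟩
  · -- InjOn
    intro a ha b hb h
    by_contra hne
    have hka : key a ≠ key b := fun hk => hne (hkeyinj a (hmemS a ha) b (hmemS b hb) hk)
    rcases lt_or_gt_of_ne hka with hlt | hgt
    · exact absurd h (Nat.ne_of_lt (hψmono a (hmemS a ha) b (hmemS b hb) hlt))
    · exact absurd h.symm (Nat.ne_of_lt (hψmono b (hmemS b hb) a (hmemS a ha) hgt))
  · -- bound
    intro a ha
    rw [hcard]
    simp only [hψ]
    apply Finset.card_lt_card
    constructor
    · exact Finset.filter_subset _ _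
    · intro hcon
      have : a ∈ s.filter fun b => key b < key a := hcon (hmemS a ha)
      simp at this
  · -- foundedness
    intro a ha
    have hmem := hψ₀mem a ha
    rw [hDsucc] at hmem
    obtain ⟨r, hr, hh, hn, hp⟩ := hmem
    refine ⟨r, hr, hh, hp.trans (hDI _), hn, ?_⟩
    intro b hb
    have hbD : b ∈ D (ψ₀ a) := hp (Finset.mem_coe.mpr hb)
    have hbI : b ∈ I := hDI _ hbD
    have hψ₀lt : ψ₀ b < ψ₀ a := by
      cases hc : ψ₀ a with
      | zero => rw [hc] at hbD; simp [hD] at hbD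
      | succ k =>
        rw [hc] at hbD
        have := hψ₀le b k hbD
        omega
    exact hψmono b (hmemS b hbI) a (hmemS a ha) (hkeylt b (hmemS b hbI) a (hmemS a ha) hψ₀lt)
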